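/- For a distributive family {π^i_j : B_i → B_{ij}}_{i≠j∈J} of algebra homomorphisms with J finite, the following are equivalent: (1) the family satisfies the cocycle condition; (2) for any proper subset K ⊊ J, any k ∈ J∖K, and any family (b_l)_{l∈K} with π^i_j(b_i) = π^j_i(b_j) for all distinct i,j ∈ K, there exists b_k ∈ B_k with π^l_k(b_l) = π^k_l(b_k) for all l ∈ K; (3) the two-element extension property: for all distinct i,j,k and compatible (b_i,b_j) there exists b_k compatible with both. -/
import Mathlib

open Function

/-- A set of ideals *generates a distributive lattice* iff it is contained in a
distributive sublattice of the lattice of ideals. -/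
def GeneratesDistribLattice {A : Type*} [CommRing A] (s : Set (Ideal A)) : Prop :=
  ∃ L : Sublattice (Ideal A), (∀ I ∈ s, I ∈ L) ∧
    ∀ x ∈ L, ∀ y ∈ L, ∀ z ∈ L, x ⊓ (y ⊔ z) = (x ⊓ y) ⊔ (x ⊓ z)

variable {J : Type*}

/-- Compatibility of `b i` and `b j`: `π^i_j (b i) = π^j_i (b j)`, where the
identification `B_{ij} = B_{ji}` is witnessed by the ring isomorphisms `e`. -/
def Compat (B : J → Type*) [∀ i, CommRing (B i)] (C : J → J → Type*)
    [∀ i j, CommRing (C i j)] (π : ∀ i j, B i →+* C i j)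
    (e : ∀ i j, C i j ≃+* C j i) (i j : J) (bi : B i) (bj : B j) : Prop :=
  π i j bi = e j i (π j i bj)

/-- A *distributive family*: all the homomorphisms `π^i_j` are surjective and, for each
`i`, the kernels `ker π^i_j` generate a distributive lattice of ideals of `B i`. -/
def DistribFamily (B : J → Type*) [∀ i, CommRing (B i)] (C : J → J → Type*)
    [∀ i j, CommRing (C i j)] (π : ∀ i j, B i →+* C i j) : Prop :=
  (∀ i j, i ≠ j → Surjective (π i j)) ∧
  ∀ i : J, GeneratesDistribLattice {I : Ideal (B i) | ∃ j, j ≠ i ∧ I = RingHom.ker (π i j)}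

/-- The first cocycle condition: `π^i_j (ker π^i_k) = π^j_i (ker π^j_k)` for all
distinct `i, j, k` (the right-hand side is transported to `C i j` by `e`). -/
def Cocycle1 (B : J → Type*) [∀ i, CommRing (B i)] (C : J → J → Type*)
    [∀ i j, CommRing (C i j)] (π : ∀ i j, B i →+* C i j)
    (e : ∀ i j, C i j ≃+* C j i) : Prop :=
  ∀ i j k : J, i ≠ j → i ≠ k → j ≠ k →
    Ideal.map (π i j) (RingHom.ker (π i k)) =
      Ideal.map ((e j i).toRingHom.comp (π j i)) (RingHom.ker (π j k))

/-- The second cocycle condition `φ^{ik}_j = φ^{ij}_k ∘ φ^{jk}_i`, expressed elementwise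
via the characterization
`φ^{ij}_k ([b_j]^j_{ik}) = [b_i]^i_{jk} ↔ π^i_j(b_i) - π^j_i(b_j) ∈ π^i_j(ker π^i_k)`. -/
def Cocycle2 (B : J → Type*) [∀ i, CommRing (B i)] (C : J → J → Type*)
    [∀ i j, CommRing (C i j)] (π : ∀ i j, B i →+* C i j)
    (e : ∀ i j, C i j ≃+* C j i) : Prop :=
  ∀ i j k : J, i ≠ j → i ≠ k → j ≠ k → ∀ (bi : B i) (bj : B j) (bk : B k),
    π j k bj - e k j (π k j bk) ∈ Ideal.map (π j k) (RingHom.ker (π j i)) →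
    π i j bi - e j i (π j i bj) ∈ Ideal.map (π i j) (RingHom.ker (π i k)) →
    π i k bi - e k i (π k i bk) ∈ Ideal.map (π i k) (RingHom.ker (π i j))

/-- The cocycle condition of Calow–Matthes. -/
def CocycleCondition (B : J → Type*) [∀ i, CommRing (B i)] (C : J → J → Type*)
    [∀ i j, CommRing (C i j)] (π : ∀ i j, B i →+* C i j)
    (e : ∀ i j, C i j ≃+* C j i) : Prop :=
  Cocycle1 B C π e ∧ Cocycle2 B C π e

/-- The two-element extension property: every compatible pair `(b_i, b_j)` extends by
some `b_k` compatible with both. -/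
def ExtendsPairs (B : J → Type*) [∀ i, CommRing (B i)] (C : J → J → Type*)
    [∀ i j, CommRing (C i j)] (π : ∀ i j, B i →+* C i j)
    (e : ∀ i j, C i j ≃+* C j i) : Prop :=
  ∀ i j k : J, i ≠ j → i ≠ k → j ≠ k → ∀ (bi : B i) (bj : B j),
    Compat B C π e i j bi bj →
    ∃ bk : B k, Compat B C π e i k bi bk ∧ Compat B C π e j k bj bk

section Aux

/-! ### Lattice auxiliary lemmas -/

variable {A : Type*} [CommRing A] {ι : Type*}

lemma my_sup_inf_distrib (L : Sublattice (Ideal A))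
    (hL : ∀ x ∈ L, ∀ y ∈ L, ∀ z ∈ L, x ⊓ (y ⊔ z) = (x ⊓ y) ⊔ (x ⊓ z))
    {x y z : Ideal A} (hx : x ∈ L) (hy : y ∈ L) (hz : z ∈ L) :
    (x ⊓ y) ⊔ z = (x ⊔ z) ⊓ (y ⊔ z) := by
  have hxz : x ⊔ z ∈ L := L.supClosed hx hz
  have h1 : (x ⊔ z) ⊓ (y ⊔ z) = (x ⊔ z) ⊓ y ⊔ (x ⊔ z) ⊓ z := hL _ hxz _ hy _ hz
  have h2 : (x ⊔ z) ⊓ y = x ⊓ y ⊔ y ⊓ z := by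
    rw [inf_comm, hL y hy x hx z hz, inf_comm y x]
  rw [h1, h2, inf_eq_right.2 (le_sup_right : z ≤ x ⊔ z), sup_assoc,
    sup_eq_right.2 (inf_le_right : y ⊓ z ≤ z)]

lemma my_finsetInf_mem (L : Sublattice (Ideal A)) {s : Finset ι} (hs : s.Nonempty)
    {f : ι → Ideal A} (hf : ∀ i ∈ s, f i ∈ L) : s.inf f ∈ L := by
  induction hs using Finset.Nonempty.cons_induction with
  | singleton a => simpa using hf a (by simp)
  | cons a s ha hs ih =>
      rw [Finset.inf_cons]
      exact L.infClosed (hf a (by simp)) (ih fun i hi => hf i (Finset.mem_cons_of_mem hi))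

lemma my_finsetInf_sup (L : Sublattice (Ideal A))
    (hL : ∀ x ∈ L, ∀ y ∈ L, ∀ z ∈ L, x ⊓ (y ⊔ z) = (x ⊓ y) ⊔ (x ⊓ z))
    {s : Finset ι} (hs : s.Nonempty) {f : ι → Ideal A} {z : Ideal A}
    (hf : ∀ i ∈ s, f i ∈ L) (hz : z ∈ L) :
    s.inf f ⊔ z = s.inf fun i => f i ⊔ z := by
  induction hs using Finset.Nonempty.cons_induction with
  | singleton a => simp
  | cons a s ha hs ih =>
      rw [Finset.inf_cons, Finset.inf_cons,
        my_sup_inf_distrib L hL (hf a (by simp))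
          (my_finsetInf_mem L hs fun i hi => hf i (Finset.mem_cons_of_mem hi)) hz,
        ih fun i hi => hf i (Finset.mem_cons_of_mem hi)]

end Aux

section Main

variable (B : J → Type*) [∀ i, CommRing (B i)] (C : J → J → Type*)
    [∀ i j, CommRing (C i j)] (π : ∀ i j, B i →+* C i j) (e : ∀ i j, C i j ≃+* C j i)

lemma compat_symm (he : ∀ i j, e j i = (e i j).symm) {i j : J} {bi : B i} {bj : B j}
    (h : Compat B C π e i j bi bj) : Compat B C π e j i bj bi := by
  unfold Compat at h ⊢
  rw [h, he i j, RingEquiv.apply_symm_apply]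

lemma ep_cocycle1 [DecidableEq J] (he : ∀ i j, e j i = (e i j).symm)
    (hdist : DistribFamily B C π) (hEP : ExtendsPairs B C π e) : Cocycle1 B C π e := by
  intro i j k hij hik hjk
  apply le_antisymm
  · intro x hx
    obtain ⟨bi, hbi, rfl⟩ := Ideal.mem_map_iff_of_surjective _ (hdist.1 i j hij) |>.1 hx
    have hcompat : Compat B C π e i k bi (0 : B k) := by
      unfold Compat
      rw [RingHom.mem_ker.1 hbi, map_zero, map_zero]
    obtain ⟨bj, h1, h2⟩ := hEP i k j hik hij (Ne.symm hjk) bi 0 hcompat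
    have hbj : bj ∈ RingHom.ker (π j k) := by
      have : (0 : C k j) = e j k (π j k bj) := by
        have := h2; unfold Compat at this; rwa [map_zero] at this
      rw [RingHom.mem_ker]
      exact (e j k).injective (by rw [← this, map_zero])
    have : π i j bi = ((e j i).toRingHom.comp (π j i)) bj := h1
    rw [this]
    exact Ideal.mem_map_of_mem _ hbj
  · intro x hx
    have hsurj : Surjective ((e j i).toRingHom.comp (π j i)) := by
      exact (e j i).surjective.comp (hdist.1 j i (Ne.symm hij))
    obtain ⟨bj, hbj, rfl⟩ := Ideal.mem_map_iff_of_surjective _ hsurj |>.1 hx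
    have hcompat : Compat B C π e j k bj (0 : B k) := by
      unfold Compat
      rw [RingHom.mem_ker.1 hbj, map_zero, map_zero]
    obtain ⟨bi, h1, h2⟩ := hEP j k i hjk (Ne.symm hij) (Ne.symm hik) bj 0 hcompat
    have hbi : bi ∈ RingHom.ker (π i k) := by
      have : (0 : C k i) = e i k (π i k bi) := by
        have := h2; unfold Compat at this; rwa [map_zero] at this
      rw [RingHom.mem_ker]
      exact (e i k).injective (by rw [← this, map_zero])
    have heq : ((e j i).toRingHom.comp (π j i)) bj = π i j bi := by
      have := h1; unfold Compat at this
      show e j i (π j i bj) = π i j bi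
      rw [this, he i j, RingEquiv.symm_apply_apply]
    rw [heq]
    exact Ideal.mem_map_of_mem _ hbi

lemma ep_cocycle2 (he : ∀ i j, e j i = (e i j).symm)
    (hdist : DistribFamily B C π) (hEP : ExtendsPairs B C π e) : Cocycle2 B C π e := by
  intro i j k hij hik hjk bi bj bk h1 h2
  obtain ⟨x, hx, hxe⟩ := Ideal.mem_map_iff_of_surjective _ (hdist.1 j k hjk) |>.1 h1
  obtain ⟨y, hy, hye⟩ := Ideal.mem_map_iff_of_surjective _ (hdist.1 i j hij) |>.1 h2
  set bj' := bj - x with hbj'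
  set bi' := bi - y with hbi'
  have hcjk : Compat B C π e j k bj' bk := by
    unfold Compat
    rw [hbj', map_sub, hxe]
    ring
  have hcij : π i j bi' = e j i (π j i bj') := by
    rw [hbi', hbj', map_sub, map_sub, hye, RingHom.mem_ker.1 hx, sub_zero]
    ring
  obtain ⟨bi'', hb1, hb2⟩ := hEP j k i hjk (Ne.symm hij) (Ne.symm hik) bj' bk hcjk
  have h3 : π i j bi' = π i j bi'' := by
    have := hb1; unfold Compat at this
    rw [hcij, this, he i j, RingEquiv.symm_apply_apply]
  have h4 : e k i (π k i bk) = π i k bi'' := by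
    have := hb2; unfold Compat at this
    rw [this, he i k, RingEquiv.symm_apply_apply]
  have h5 : π i k bi' = π i k bi := by
    rw [hbi', map_sub, RingHom.mem_ker.1 hy, sub_zero]
  have hmem : bi' - bi'' ∈ RingHom.ker (π i j) := by
    rw [RingHom.mem_ker, map_sub, h3, sub_self]
  have := Ideal.mem_map_of_mem (π i k) hmem
  rwa [map_sub, h5, ← h4] at this

/-- The key induction: the cocycle condition (in fact `Cocycle2` suffices) gives the
one-point extension property over any finite set avoiding `k`. -/
lemma cocycle2_ext (he : ∀ i j, e j i = (e i j).symm)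
    (hdist : DistribFamily B C π) (h2 : Cocycle2 B C π e) (k : J) :
    ∀ K : Finset J, k ∉ K → ∀ b : ∀ l, B l,
      (∀ i ∈ K, ∀ j ∈ K, i ≠ j → Compat B C π e i j (b i) (b j)) →
      ∃ bk : B k, ∀ l ∈ K, Compat B C π e l k (b l) bk := by
  classical
  intro K
  induction K using Finset.induction_on with
  | empty => exact fun _ b _ => ⟨0, by simp⟩
  | @insert m K' hm ih =>
    intro hk b hb
    have hkm : k ≠ m := fun h => hk (by simp [h])
    have hkK' : k ∉ K' := fun h => hk (Finset.mem_insert_of_mem h)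
    obtain ⟨c, hc⟩ := ih hkK' b fun i hi j hj hij =>
      hb i (Finset.mem_insert_of_mem hi) j (Finset.mem_insert_of_mem hj) hij
    obtain ⟨d, hd⟩ := hdist.1 k m hkm (e m k (π m k (b m)))
    have hdcompat : π m k (b m) = e k m (π k m d) := by
      rw [hd, he m k, RingEquiv.symm_apply_apply]
    have hl : ∀ l ∈ K', c - d ∈ RingHom.ker (π k l) ⊔ RingHom.ker (π k m) := by
      intro l hlK'
      have hkl : k ≠ l := fun h => hkK' (h ▸ hlK')
      have hlm : l ≠ m := fun h => hm (h ▸ hlK')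
      have hcl : π l k (b l) = e k l (π k l c) := hc l hlK'
      have hblm : Compat B C π e l m (b l) (b m) :=
        hb l (Finset.mem_insert_of_mem hlK') m (Finset.mem_insert_self m K') hlm
      have conc := h2 k l m hkl hkm hlm c (b l) (b m)
        (by unfold Compat at hblm; rw [hblm, sub_self]; exact Ideal.zero_mem _)
        (by rw [hcl, he l k, RingEquiv.apply_symm_apply, sub_self]; exact Ideal.zero_mem _)
      rw [← hd] at conc
      obtain ⟨w, hw, hweq⟩ := Ideal.mem_map_iff_of_surjective _ (hdist.1 k m hkm) |>.1 conc
      refine Submodule.mem_sup.2 ⟨w, hw, c - d - w, ?_, by ring⟩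
      rw [RingHom.mem_ker, map_sub, map_sub, hweq]
      ring
    have hmem : c - d ∈ (K'.inf fun l => RingHom.ker (π k l)) ⊔ RingHom.ker (π k m) := by
      rcases K'.eq_empty_or_nonempty with h | hne
      · rw [h]; simp
      · obtain ⟨L, hLmem, hLdist⟩ := hdist.2 k
        rw [my_finsetInf_sup L hLdist hne
          (fun l hl => hLmem _ ⟨l, fun h => hkK' (h ▸ hl), rfl⟩)
          (hLmem _ ⟨m, hkm.symm, rfl⟩)]
        rw [Submodule.mem_finsetInf]
        exact hl
    obtain ⟨u, hu, v, hv, huv⟩ := Submodule.mem_sup.1 hmem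
    refine ⟨c - u, ?_⟩
    intro l hl'
    rcases Finset.mem_insert.1 hl' with rfl | hlK'
    · have hcd : c - u = d + v := by linear_combination -huv
      unfold Compat
      rw [hcd, map_add, RingHom.mem_ker.1 hv, add_zero]
      exact hdcompat
    · have hu' : u ∈ RingHom.ker (π k l) :=
        (Finset.inf_le hlK' : K'.inf (fun l => RingHom.ker (π k l)) ≤ _) hu
      unfold Compat
      rw [map_sub, RingHom.mem_ker.1 hu', sub_zero]
      exact hc l hlK'

lemma ext_ep [Fintype J] [DecidableEq J] (he : ∀ i j, e j i = (e i j).symm)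
    (hP1 : ∀ K : Finset J, K ≠ Finset.univ → ∀ k ∉ K, ∀ b : ∀ l, B l,
        (∀ i ∈ K, ∀ j ∈ K, i ≠ j → Compat B C π e i j (b i) (b j)) →
        ∃ bk : B k, ∀ l ∈ K, Compat B C π e l k (b l) bk) :
    ExtendsPairs B C π e := by
  intro i j k hij hik hjk bi bj hcompat
  set b : ∀ l, B l := Function.update (Function.update (fun l => (0 : B l)) i bi) j bj with hbdef
  have hbi : b i = bi := by
    rw [hbdef, Function.update_of_ne hij, Function.update_self]
  have hbj : b j = bj := Function.update_self j bj _
  have hkK : k ∉ ({i, j} : Finset J) := by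
    simp only [Finset.mem_insert, Finset.mem_singleton]
    push_neg
    exact ⟨Ne.symm hik, Ne.symm hjk⟩
  have hKne : ({i, j} : Finset J) ≠ Finset.univ := fun h => hkK (h ▸ Finset.mem_univ k)
  have hbc : ∀ l ∈ ({i, j} : Finset J), ∀ m ∈ ({i, j} : Finset J), l ≠ m →
      Compat B C π e l m (b l) (b m) := by
    intro l hl m hm hlm
    have hl' : l = i ∨ l = j := by simpa using hl
    have hm' : m = i ∨ m = j := by simpa using hm
    rcases hl' with rfl | rfl
    · rcases hm' with rfl | rfl
      · exact absurd rfl hlm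
      · rw [hbi, hbj]; exact hcompat
    · rcases hm' with rfl | rfl
      · rw [hbi, hbj]; exact compat_symm B C π e he hcompat
      · exact absurd rfl hlm
  obtain ⟨bk, hbk⟩ := hP1 {i, j} hKne k hkK b hbc
  refine ⟨bk, ?_, ?_⟩
  · have := hbk i (by simp); rwa [hbi] at this
  · have := hbk j (by simp); rwa [hbj] at this

end Main

theorem stmt4 [Fintype J] [DecidableEq J] (B : J → Type*) [∀ i, CommRing (B i)]
    (C : J → J → Type*) [∀ i j, CommRing (C i j)]
    (π : ∀ i j, B i →+* C i j) (e : ∀ i j, C i j ≃+* C j i)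
    (he : ∀ i j, e j i = (e i j).symm)
    (hdist : DistribFamily B C π) :
    (CocycleCondition B C π e ↔
      (∀ K : Finset J, K ≠ Finset.univ → ∀ k ∉ K, ∀ b : ∀ l, B l,
        (∀ i ∈ K, ∀ j ∈ K, i ≠ j → Compat B C π e i j (b i) (b j)) →
        ∃ bk : B k, ∀ l ∈ K, Compat B C π e l k (b l) bk)) ∧
    (CocycleCondition B C π e ↔ ExtendsPairs B C π e) := by
  have fwd : CocycleCondition B C π e →
      ∀ K : Finset J, K ≠ Finset.univ → ∀ k ∉ K, ∀ b : ∀ l, B l,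
        (∀ i ∈ K, ∀ j ∈ K, i ≠ j → Compat B C π e i j (b i) (b j)) →
        ∃ bk : B k, ∀ l ∈ K, Compat B C π e l k (b l) bk :=
    fun hc K _ k hk b hb => cocycle2_ext B C π e he hdist hc.2 k K hk b hb
  have bwd : ExtendsPairs B C π e → CocycleCondition B C π e := fun hEP =>
    ⟨ep_cocycle1 B C π e he hdist hEP, ep_cocycle2 B C π e he hdist hEP⟩
  refine ⟨⟨fwd, fun hP1 => bwd (ext_ep B C π e he hP1)⟩,
    ⟨fun hc => ext_ep B C π e he (fwd hc), bwd⟩⟩
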